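/- Let γ : ℝ³ → S₃(ℝ) be a smooth symmetric matrix field. Then sym(curl(curl(S γ))) = inc γ - S(def(div(S γ))) - S(Hess(tr γ)), where S(A) = Aᵀ - tr(A)I₃, inc is the row-wise curl composed with column-wise curl, def is the symmetric gradient, Hess is the Hessian, and all matrix differential operators act column-wise. -/

import Mathlib

noncomputable section

/-- Levi-Civita symbol in three dimensions. -/
def lc (i j k : Fin 3) : ℝ :=
  if (i, j, k) = (0, 1, 2) ∨ (i, j, k) = (1, 2, 0) ∨ (i, j, k) = (2, 0, 1) then 1
  else if (i, j, k) = (0, 2, 1) ∨ (i, j, k) = (2, 1, 0) ∨ (i, j, k) = (1, 0, 2) then -1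
  else 0

/-- Partial derivative `∂ᵢ f` of a scalar field on `ℝ³`. -/
def pd (i : Fin 3) (f : (Fin 3 → ℝ) → ℝ) (x : Fin 3 → ℝ) : ℝ :=
  fderiv ℝ f x (Pi.single i 1)

/-- Curl of a vector field: `(curl v)ᵢ = εᵢⱼₖ ∂ⱼ vₖ`. -/
def vcurl (v : (Fin 3 → ℝ) → Fin 3 → ℝ) (x : Fin 3 → ℝ) (i : Fin 3) : ℝ :=
  ∑ j, ∑ k, lc i j k * pd j (fun y => v y k) x

/-- Column-wise curl of a matrix field: `(curl M)ᵢⱼ = εᵢₖₗ ∂ₖ Mₗⱼ`. -/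
def mcurl (M : (Fin 3 → ℝ) → Matrix (Fin 3) (Fin 3) ℝ) (x : Fin 3 → ℝ) :
    Matrix (Fin 3) (Fin 3) ℝ :=
  Matrix.of fun i j => ∑ k, ∑ l, lc i k l * pd k (fun y => M y l j) x

/-- Column-wise divergence of a matrix field: `(div M)ᵢ = ∂ⱼ Mⱼᵢ`. -/
def mdiv (M : (Fin 3 → ℝ) → Matrix (Fin 3) (Fin 3) ℝ) (x : Fin 3 → ℝ) (i : Fin 3) : ℝ :=
  ∑ j, pd j (fun y => M y j i) x

/-- The algebraic operator `S(A) = Aᵀ - tr(A)·I₃`. -/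
def Sop (A : Matrix (Fin 3) (Fin 3) ℝ) : Matrix (Fin 3) (Fin 3) ℝ :=
  A.transpose - A.trace • (1 : Matrix (Fin 3) (Fin 3) ℝ)

/-- `(mskw V)ᵢⱼ = -εᵢⱼₖ Vₖ`. -/
def mskw (V : Fin 3 → ℝ) : Matrix (Fin 3) (Fin 3) ℝ :=
  Matrix.of fun i j => -∑ k, lc i j k * V k

/-- `(vskw M)ᵢ = -(1/2) εᵢⱼₖ Mⱼₖ`. -/
def vskw (M : Matrix (Fin 3) (Fin 3) ℝ) : Fin 3 → ℝ :=
  fun i => -(1 / 2 : ℝ) * ∑ j, ∑ k, lc i j k * M j k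

/-- Symmetric gradient . -/
def defv (v : (Fin 3 → ℝ) → Fin 3 → ℝ) (x : Fin 3 → ℝ) : Matrix (Fin 3) (Fin 3) ℝ :=
  Matrix.of fun i j => (1 / 2 : ℝ) * (pd i (fun y => v y j) x + pd j (fun y => v y i) x)

/-- The incompatibility operator: row-wise curl followed by column-wise curl. -/
def inc (γ : (Fin 3 → ℝ) → Matrix (Fin 3) (Fin 3) ℝ) (x : Fin 3 → ℝ) :
    Matrix (Fin 3) (Fin 3) ℝ :=
  mcurl (fun y => (mcurl (fun z => (γ z).transpose) y).transpose) x

/-- Hessian of a scalar field. -/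
def hess (u : (Fin 3 → ℝ) → ℝ) (x : Fin 3 → ℝ) : Matrix (Fin 3) (Fin 3) ℝ :=
  Matrix.of fun i j => pd i (fun y => pd j u y) x


lemma lc_000 : lc 0 0 0 = 0 := by rw [lc, if_neg (by decide), if_neg (by decide)]
lemma lc_001 : lc 0 0 1 = 0 := by rw [lc, if_neg (by decide), if_neg (by decide)]
lemma lc_002 : lc 0 0 2 = 0 := by rw [lc, if_neg (by decide), if_neg (by decide)]
lemma lc_010 : lc 0 1 0 = 0 := by rw [lc, if_neg (by decide), if_neg (by decide)]
lemma lc_011 : lc 0 1 1 = 0 := by rw [lc, if_neg (by decide), if_neg (by decide)]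
lemma lc_012 : lc 0 1 2 = 1 := by rw [lc, if_pos (by decide)]
lemma lc_020 : lc 0 2 0 = 0 := by rw [lc, if_neg (by decide), if_neg (by decide)]
lemma lc_021 : lc 0 2 1 = -1 := by rw [lc, if_neg (by decide), if_pos (by decide)]
lemma lc_022 : lc 0 2 2 = 0 := by rw [lc, if_neg (by decide), if_neg (by decide)]
lemma lc_100 : lc 1 0 0 = 0 := by rw [lc, if_neg (by decide), if_neg (by decide)]
lemma lc_101 : lc 1 0 1 = 0 := by rw [lc, if_neg (by decide), if_neg (by decide)]
lemma lc_102 : lc 1 0 2 = -1 := by rw [lc, if_neg (by decide), if_pos (by decide)]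
lemma lc_110 : lc 1 1 0 = 0 := by rw [lc, if_neg (by decide), if_neg (by decide)]
lemma lc_111 : lc 1 1 1 = 0 := by rw [lc, if_neg (by decide), if_neg (by decide)]
lemma lc_112 : lc 1 1 2 = 0 := by rw [lc, if_neg (by decide), if_neg (by decide)]
lemma lc_120 : lc 1 2 0 = 1 := by rw [lc, if_pos (by decide)]
lemma lc_121 : lc 1 2 1 = 0 := by rw [lc, if_neg (by decide), if_neg (by decide)]
lemma lc_122 : lc 1 2 2 = 0 := by rw [lc, if_neg (by decide), if_neg (by decide)]
lemma lc_200 : lc 2 0 0 = 0 := by rw [lc, if_neg (by decide), if_neg (by decide)]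
lemma lc_201 : lc 2 0 1 = 1 := by rw [lc, if_pos (by decide)]
lemma lc_202 : lc 2 0 2 = 0 := by rw [lc, if_neg (by decide), if_neg (by decide)]
lemma lc_210 : lc 2 1 0 = -1 := by rw [lc, if_neg (by decide), if_pos (by decide)]
lemma lc_211 : lc 2 1 1 = 0 := by rw [lc, if_neg (by decide), if_neg (by decide)]
lemma lc_212 : lc 2 1 2 = 0 := by rw [lc, if_neg (by decide), if_neg (by decide)]
lemma lc_220 : lc 2 2 0 = 0 := by rw [lc, if_neg (by decide), if_neg (by decide)]
lemma lc_221 : lc 2 2 1 = 0 := by rw [lc, if_neg (by decide), if_neg (by decide)]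
lemma lc_222 : lc 2 2 2 = 0 := by rw [lc, if_neg (by decide), if_neg (by decide)]

lemma pd_add' {f g : (Fin 3 → ℝ) → ℝ} {x} (i : Fin 3)
    (hf : DifferentiableAt ℝ f x) (hg : DifferentiableAt ℝ g x) :
    pd i (fun y => f y + g y) x = pd i f x + pd i g x := by
  simp [pd, fderiv_fun_add hf hg]

lemma pd_sub' {f g : (Fin 3 → ℝ) → ℝ} {x} (i : Fin 3)
    (hf : DifferentiableAt ℝ f x) (hg : DifferentiableAt ℝ g x) :
    pd i (fun y => f y - g y) x = pd i f x - pd i g x := by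
  simp [pd, fderiv_fun_sub hf hg]

lemma pd_neg' {f : (Fin 3 → ℝ) → ℝ} {x} (i : Fin 3) :
    pd i (fun y => -f y) x = -pd i f x := by
  simp [pd, fderiv_neg]

lemma pd_const_mul' {f : (Fin 3 → ℝ) → ℝ} {x} (i : Fin 3) (c : ℝ)
    (hf : DifferentiableAt ℝ f x) :
    pd i (fun y => c * f y) x = c * pd i f x := by
  simp [pd, fderiv_const_mul hf c]

lemma pd_contDiff' {f : (Fin 3 → ℝ) → ℝ} {n m : ℕ} (i : Fin 3)
    (hf : ContDiff ℝ n f) (h : m + 1 ≤ n) :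
    ContDiff ℝ m (pd i f) := by
  have : ContDiff ℝ (m : ℕ∞) (fderiv ℝ f) := hf.fderiv_right (by exact_mod_cast h)
  exact this.clm_apply contDiff_const

lemma pd_comm' {f : (Fin 3 → ℝ) → ℝ} (hf : ContDiff ℝ 2 f) (x) (a b : Fin 3) :
    pd a (pd b f) x = pd b (pd a f) x := by
  have hd : ∀ y, HasFDerivAt f (fderiv ℝ f y) y := fun y =>
    ((hf.differentiable (by norm_num)) y).hasFDerivAt
  have hdf : Differentiable ℝ (fderiv ℝ f) :=
    (hf.fderiv_right (by norm_num) : ContDiff ℝ (1:ℕ∞) _).differentiable (by norm_num)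
  have h2 : HasFDerivAt (fderiv ℝ f) (fderiv ℝ (fderiv ℝ f) x) x := (hdf x).hasFDerivAt
  have hs := second_derivative_symmetric hd h2 (Pi.single b 1) (Pi.single a 1)
  have key : ∀ (c d : Fin 3), pd c (pd d f) x
      = fderiv ℝ (fderiv ℝ f) x (Pi.single c 1) (Pi.single d 1) := by
    intro c d
    have : pd d f = fun y => (fderiv ℝ f y) (Pi.single d 1) := rfl
    rw [pd, this, fderiv_clm_apply (hdf x) (differentiableAt_const _)]
    simp
  rw [key, key, hs]

set_option maxHeartbeats 2000000 in
theorem stmt_12 (γ : (Fin 3 → ℝ) → Matrix (Fin 3) (Fin 3) ℝ)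
    (hγ : ∀ i j, ContDiff ℝ 3 fun x => γ x i j)
    (hsym : ∀ x, (γ x).transpose = γ x) :
    ∀ (x : Fin 3 → ℝ) (i j : Fin 3),
      (1 / 2 : ℝ) * (mcurl (fun y => mcurl (fun z => Sop (γ z)) y) x i j +
          mcurl (fun y => mcurl (fun z => Sop (γ z)) y) x j i) =
        inc γ x i j - Sop (defv (fun y => mdiv (fun z => Sop (γ z)) y) x) i j -
          Sop (hess (fun y => (γ y).trace) x) i j := by
  intro x i j
  have hd0 : ∀ a b : Fin 3, Differentiable ℝ fun y => γ y a b :=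
    fun a b => (hγ a b).differentiable (by norm_num)
  have hc2 : ∀ a b : Fin 3, ContDiff ℝ 2 fun y => γ y a b :=
    fun a b => (hγ a b).of_le (by norm_num)
  have hd1 : ∀ (l a b : Fin 3), Differentiable ℝ (pd l fun z => γ z a b) :=
    fun l a b => (pd_contDiff' (m:=2) l (hγ a b) (by norm_num)).differentiable (by norm_num)
  have hs10 : ∀ z, γ z 1 0 = γ z 0 1 := fun z => by simpa using congrFun (congrFun (hsym z).symm 1) 0
  have hs20 : ∀ z, γ z 2 0 = γ z 0 2 := fun z => by simpa using congrFun (congrFun (hsym z).symm 2) 0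
  have hs21 : ∀ z, γ z 2 1 = γ z 1 2 := fun z => by simpa using congrFun (congrFun (hsym z).symm 2) 1
  have hpc10 : ∀ a b : Fin 3, pd 1 (pd 0 fun z => γ z a b) x = pd 0 (pd 1 fun z => γ z a b) x :=
    fun a b => pd_comm' (hc2 a b) x 1 0
  have hpc20 : ∀ a b : Fin 3, pd 2 (pd 0 fun z => γ z a b) x = pd 0 (pd 2 fun z => γ z a b) x :=
    fun a b => pd_comm' (hc2 a b) x 2 0
  have hpc21 : ∀ a b : Fin 3, pd 2 (pd 1 fun z => γ z a b) x = pd 1 (pd 2 fun z => γ z a b) x :=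
    fun a b => pd_comm' (hc2 a b) x 2 1
  fin_cases i <;> fin_cases j <;>
  · simp only [inc, mcurl, mdiv, defv, hess, Sop, Matrix.of_apply, Matrix.sub_apply,
      Matrix.smul_apply, Matrix.transpose_apply, Matrix.one_apply, Matrix.trace, Matrix.diag,
      smul_eq_mul, Fin.sum_univ_three, lc_000, lc_001, lc_002, lc_010, lc_011, lc_012, lc_020, lc_021, lc_022, lc_100, lc_101, lc_102, lc_110, lc_111, lc_112, lc_120, lc_121, lc_122, lc_200, lc_201, lc_202, lc_210, lc_211, lc_212, lc_220, lc_221, lc_222,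
      Fin.isValue, Fin.zero_eta, Fin.mk_one, Fin.reduceFinMk, Fin.reduceEq, reduceIte, one_mul, neg_one_mul, mul_zero, zero_mul, mul_one, add_zero,
      zero_add, sub_zero, zero_sub, neg_add_rev, neg_neg, neg_zero]
    simp (disch := fun_prop) only [pd_add', pd_sub', pd_neg', pd_const_mul']
    simp only [hs10, hs20, hs21, hpc10, hpc20, hpc21]
    ring


end
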